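/- Every Hilbert C*-module over the C*-algebra ℂ^{m×m} of m×m complex matrices possesses an orthonormal basis, i.e., an orthonormal system whose A-linear span is dense. -/

import Mathlib

open scoped Matrix.Norms.L2Operator ComplexOrder

/-- A Hilbert C*-module over the C*-algebra `ℂ^{m×m}` of `m × m` complex matrices (with the
operator norm): a right module with a matrix-valued inner product inducing the norm of `M`. -/
structure HilbertModuleMat (m : ℕ) (M : Type*) [NormedAddCommGroup M] where
  smul : M → Matrix (Fin m) (Fin m) ℂ → M
  inner : M → M → Matrix (Fin m) (Fin m) ℂ
  smul_add_vec : ∀ (u v : M) c, smul (u + v) c = smul u c + smul v c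
  smul_add_alg : ∀ (u : M) c d, smul u (c + d) = smul u c + smul u d
  smul_mul : ∀ (u : M) c d, smul u (c * d) = smul (smul u c) d
  smul_one : ∀ u : M, smul u 1 = u
  inner_add_right : ∀ u v w : M, inner u (v + w) = inner u v + inner u w
  inner_smul_right : ∀ (u v : M) c, inner u (smul v c) = inner u v * c
  inner_conj : ∀ u v : M, inner v u = star (inner u v)
  inner_self_posSemidef : ∀ u : M, (inner u u).PosSemidef
  inner_definite : ∀ u : M, inner u u = 0 → u = 0
  norm_eq : ∀ u : M, ‖u‖ = Real.sqrt ‖inner u u‖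

/-- A vector `q` is *normalized* if `⟨q,q⟩` is a nonzero idempotent. -/
def HilbertModuleMat.Normalized {m : ℕ} {M : Type*} [NormedAddCommGroup M]
    (h : HilbertModuleMat m M) (q : M) : Prop :=
  h.inner q q ≠ 0 ∧ h.inner q q * h.inner q q = h.inner q q

/-- The set of finite right `ℂ^{m×m}`-linear combinations of elements of `S`. -/
def matLinSpan {m : ℕ} {M : Type*} [NormedAddCommGroup M] (h : HilbertModuleMat m M)
    (S : Set M) : Set M :=
  {v : M | ∃ (n : ℕ) (u : Fin n → M) (c : Fin n → Matrix (Fin m) (Fin m) ℂ),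
    (∀ i, u i ∈ S) ∧ v = ∑ i, h.smul (u i) (c i)}

/-! ### Auxiliary lemmas about complex matrices (with the `L2` operator norm) -/

namespace HMMaux

open scoped Matrix

variable {m : ℕ}

lemma star_mul_self_eq (z : ℂ) : star z * z = ((‖z‖^2 : ℝ) : ℂ) := by
  rw [Complex.star_def, mul_comm, Complex.mul_conj, Complex.normSq_eq_norm_sq]

lemma diag_rep (B : Matrix (Fin m) (Fin m) ℂ) (i : Fin m) :
    (Bᴴ * B) i i = ((∑ k, ‖B k i‖^2 : ℝ) : ℂ) := by
  rw [Matrix.mul_apply]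
  push_cast
  refine Finset.sum_congr rfl fun k _ => ?_
  rw [Matrix.conjTranspose_apply, star_mul_self_eq]
  norm_num

lemma trace_rep (B : Matrix (Fin m) (Fin m) ℂ) :
    Matrix.trace (Bᴴ * B) = ((∑ i, ∑ k, ‖B k i‖ ^ 2 : ℝ) : ℂ) := by
  rw [Matrix.trace]
  push_cast
  exact Finset.sum_congr rfl fun i _ => by rw [Matrix.diag_apply, diag_rep]; push_cast; rfl

lemma eq_zero_of_trace_conjTranspose_mul_self {B : Matrix (Fin m) (Fin m) ℂ}
    (h0 : Matrix.trace (Bᴴ * B) = 0) : B = 0 := by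
  rw [trace_rep] at h0
  norm_cast at h0
  ext k i
  have h1 : ∀ i ∈ (Finset.univ : Finset (Fin m)), (0:ℝ) ≤ ∑ k, ‖B k i‖ ^ 2 :=
    fun i _ => by positivity
  have h2 := (Finset.sum_eq_zero_iff_of_nonneg h1).mp h0 i (Finset.mem_univ i)
  have h3 : ∀ k ∈ (Finset.univ : Finset (Fin m)), (0:ℝ) ≤ ‖B k i‖ ^ 2 :=
    fun k _ => by positivity
  have h4 := (Finset.sum_eq_zero_iff_of_nonneg h3).mp h2 k (Finset.mem_univ k)
  simpa using h4

open scoped MatrixOrder in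
lemma posSemidef_iff_eq_transpose_mul_self {A : Matrix (Fin m) (Fin m) ℂ} :
    A.PosSemidef ↔ ∃ B : Matrix (Fin m) (Fin m) ℂ, A = Bᴴ * B := by
  refine ⟨fun hA => ?_, fun ⟨B, hB⟩ => hB ▸ Matrix.posSemidef_conjTranspose_mul_self B⟩
  obtain ⟨B, hB⟩ := CStarAlgebra.nonneg_iff_eq_star_mul_self.mp hA.nonneg
  exact ⟨B, hB⟩

lemma psd_trace_re_nonneg {A : Matrix (Fin m) (Fin m) ℂ} (hA : A.PosSemidef) :
    0 ≤ (Matrix.trace A).re := by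
  obtain ⟨B, rfl⟩ := posSemidef_iff_eq_transpose_mul_self.mp hA
  rw [trace_rep, Complex.ofReal_re]
  positivity

lemma psd_trace_eq_zero {A : Matrix (Fin m) (Fin m) ℂ} (hA : A.PosSemidef)
    (h0 : Matrix.trace A = 0) : A = 0 := by
  obtain ⟨B, rfl⟩ := posSemidef_iff_eq_transpose_mul_self.mp hA
  rw [eq_zero_of_trace_conjTranspose_mul_self h0]
  simp

lemma eucl_norm_sq (y : EuclideanSpace ℂ (Fin m)) : ‖y‖ ^ 2 = ∑ j, ‖y j‖ ^ 2 := by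
  rw [EuclideanSpace.norm_eq, Real.sq_sqrt (by positivity)]

lemma component_le (y : EuclideanSpace ℂ (Fin m)) (i : Fin m) : ‖y i‖ ≤ ‖y‖ := by
  rw [EuclideanSpace.norm_eq]
  have h1 : ‖y i‖ ^ 2 ≤ ∑ k, ‖y k‖ ^ 2 :=
    Finset.single_le_sum (f := fun k => ‖y k‖^2) (fun k _ => by positivity) (Finset.mem_univ i)
  calc ‖y i‖ = Real.sqrt (‖y i‖ ^ 2) := by rw [Real.sqrt_sq (norm_nonneg _)]
  _ ≤ _ := Real.sqrt_le_sqrt h1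

lemma entry_le (A : Matrix (Fin m) (Fin m) ℂ) (i j : Fin m) : ‖A i j‖ ≤ ‖A‖ := by
  have h := A.l2_opNorm_mulVec (EuclideanSpace.single j 1)
  have hx : ‖(EuclideanSpace.single j (1:ℂ) : EuclideanSpace ℂ (Fin m))‖ = 1 := by
    simp [EuclideanSpace.norm_single]
  rw [hx, mul_one] at h
  refine le_trans ?_ h
  have h2 := component_le
    ((EuclideanSpace.equiv (Fin m) ℂ).symm <| A *ᵥ (EuclideanSpace.single j 1)) i
  refine le_trans (le_of_eq ?_) h2
  congr 1
  show A i j = (A *ᵥ (EuclideanSpace.single j (1:ℂ) : EuclideanSpace ℂ (Fin m))) i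
  simp [Matrix.mulVec, dotProduct, EuclideanSpace.single_apply]

lemma row_cs (a x : Fin m → ℂ) :
    ‖∑ j, a j * x j‖ ^ 2 ≤ (∑ j, ‖a j‖^2) * (∑ j, ‖x j‖^2) := by
  let u : EuclideanSpace ℂ (Fin m) := WithLp.toLp 2 (fun j => star (a j))
  let v : EuclideanSpace ℂ (Fin m) := WithLp.toLp 2 x
  have h := norm_inner_le_norm (𝕜 := ℂ) u v
  have hin : inner (𝕜 := ℂ) u v = ∑ j, a j * x j := by
    simp [inner, u, v]
    exact Finset.sum_congr rfl fun _ _ => mul_comm _ _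
  rw [hin] at h
  have h2 : ‖∑ j, a j * x j‖ ^ 2 ≤ (‖u‖ * ‖v‖) ^ 2 :=
    pow_le_pow_left₀ (norm_nonneg _) h 2
  rw [mul_pow, eucl_norm_sq, eucl_norm_sq] at h2
  simpa [u, v] using h2

set_option maxHeartbeats 2000000 in
lemma op_le_frob (B : Matrix (Fin m) (Fin m) ℂ) :
    ‖B‖ ^ 2 ≤ ∑ i, ∑ j, ‖B i j‖ ^ 2 := by
  have hnn : (0:ℝ) ≤ Real.sqrt (∑ i, ∑ j, ‖B i j‖ ^ 2) := Real.sqrt_nonneg _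
  have hb : ‖B‖ ≤ Real.sqrt (∑ i, ∑ j, ‖B i j‖ ^ 2) := by
    rw [Matrix.l2_opNorm_def]
    refine ContinuousLinearMap.opNorm_le_bound _ hnn fun x => ?_
    have hx : ‖(LinearMap.toContinuousLinearMap (Matrix.toEuclideanLin B)) x‖ ^ 2
        ≤ (∑ i, ∑ j, ‖B i j‖ ^ 2) * ‖x‖ ^ 2 := by
      have : (LinearMap.toContinuousLinearMap (Matrix.toEuclideanLin B)) x
          = (WithLp.equiv 2 (Fin m → ℂ)).symm (B *ᵥ (WithLp.equiv 2 (Fin m → ℂ)) x) := by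
        exact Matrix.toEuclideanLin_apply B x
      rw [this, eucl_norm_sq]
      have hxsq : ‖x‖ ^ 2 = ∑ j, ‖x j‖ ^ 2 := eucl_norm_sq x
      rw [hxsq, Finset.sum_mul]
      refine Finset.sum_le_sum fun i _ => ?_
      have := row_cs (fun j => B i j) (fun j => (WithLp.equiv 2 (Fin m → ℂ)) x j)
      simpa [Matrix.mulVec, dotProduct, WithLp.equiv] using this
    calc ‖(LinearMap.toContinuousLinearMap (Matrix.toEuclideanLin B)) x‖
        = Real.sqrt (‖(LinearMap.toContinuousLinearMap (Matrix.toEuclideanLin B)) x‖^2) := by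
          rw [Real.sqrt_sq (norm_nonneg _)]
      _ ≤ Real.sqrt ((∑ i, ∑ j, ‖B i j‖ ^ 2) * ‖x‖ ^ 2) := Real.sqrt_le_sqrt hx
      _ = Real.sqrt (∑ i, ∑ j, ‖B i j‖ ^ 2) * ‖x‖ := by
          rw [Real.sqrt_mul (by positivity), Real.sqrt_sq (norm_nonneg _)]
  calc ‖B‖ ^ 2 ≤ (Real.sqrt (∑ i, ∑ j, ‖B i j‖ ^ 2)) ^ 2 :=
        pow_le_pow_left₀ (norm_nonneg _) hb 2
    _ = _ := Real.sq_sqrt (by positivity)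

lemma psd_norm_le_trace {A : Matrix (Fin m) (Fin m) ℂ} (hA : A.PosSemidef) :
    ‖A‖ ≤ (Matrix.trace A).re := by
  obtain ⟨B, rfl⟩ := posSemidef_iff_eq_transpose_mul_self.mp hA
  rw [Matrix.l2_opNorm_conjTranspose_mul_self, trace_rep, Complex.ofReal_re, ← pow_two]
  calc ‖B‖ ^ 2 ≤ ∑ i, ∑ j, ‖B i j‖ ^ 2 := op_le_frob B
    _ = ∑ i, ∑ k, ‖B k i‖ ^ 2 := Finset.sum_comm

lemma psd_trace_le {A : Matrix (Fin m) (Fin m) ℂ} (hA : A.PosSemidef) :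
    (Matrix.trace A).re ≤ (m : ℝ) * ‖A‖ := by
  rw [Matrix.trace, Complex.re_sum]
  calc (∑ i, (A.diag i).re) ≤ ∑ i, ‖A‖ := by
        refine Finset.sum_le_sum fun i _ => ?_
        calc (A.diag i).re ≤ ‖A i i‖ := by
              rw [Matrix.diag_apply]
              exact (Complex.re_le_norm _).trans_eq rfl
          _ ≤ ‖A‖ := entry_le A i i
    _ = (m : ℝ) * ‖A‖ := by simp [Finset.sum_const, Finset.card_univ]

lemma conjT_std (i : Fin m) (a : ℂ) :
    (Matrix.single i i a)ᴴ = Matrix.single i i (star a) := by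
  ext p q
  simp [Matrix.single, Matrix.conjTranspose_apply, and_comm]
  aesop

lemma sandwich (A : Matrix (Fin m) (Fin m) ℂ) (i : Fin m) (a b : ℂ) :
    Matrix.single i i a * A * Matrix.single i i b
      = Matrix.single i i (a * A i i * b) := by
  ext p q
  simp [Matrix.mul_apply, Matrix.single, ite_and, Finset.mul_sum, Finset.sum_ite_eq,
    Finset.sum_ite_eq', mul_comm, mul_assoc, mul_left_comm]
  aesop

lemma psd_normalizer {A : Matrix (Fin m) (Fin m) ℂ} (hA : A.PosSemidef) (hne : A ≠ 0) :
    ∃ (c : Matrix (Fin m) (Fin m) ℂ) (i : Fin m),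
      cᴴ * A * c = Matrix.single i i 1 := by
  obtain ⟨B, rfl⟩ := posSemidef_iff_eq_transpose_mul_self.mp hA
  have hBne : B ≠ 0 := by rintro rfl; simp at hne
  obtain ⟨k, i, hki⟩ : ∃ k i, B k i ≠ 0 := by
    by_contra hc
    push_neg at hc
    exact hBne (by ext k i; simpa using hc k i)
  set r : ℝ := ∑ l, ‖B l i‖^2 with hr
  have hrpos : 0 < r := by
    rw [hr]
    refine Finset.sum_pos' (fun l _ => by positivity)
      ⟨k, Finset.mem_univ k, pow_pos (norm_pos_iff.mpr hki) 2⟩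
  have hdiag : (Bᴴ * B) i i = (r : ℂ) := diag_rep B i
  refine ⟨Matrix.single i i (((Real.sqrt r : ℝ) : ℂ))⁻¹, i, ?_⟩
  rw [conjT_std, sandwich, hdiag]
  congr 1
  rw [star_inv₀]
  rw [show star ((Real.sqrt r : ℝ) : ℂ) = ((Real.sqrt r : ℝ) : ℂ) from Complex.conj_ofReal _]
  have h2 : Real.sqrt r * Real.sqrt r = r := Real.mul_self_sqrt hrpos.le
  rw [mul_comm _ ((r:ℂ)), mul_assoc, ← mul_inv, ← Complex.ofReal_mul, h2,
    mul_inv_cancel₀ (by exact_mod_cast hrpos.ne')]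

lemma stdBasisMatrix_ne_zero (i : Fin m) : Matrix.single i i (1:ℂ) ≠ 0 := by
  intro hcon
  have := congrFun (congrFun hcon i) i
  rw [Matrix.single_apply_same] at this
  simp at this

/-! ### Auxiliary lemmas about Hilbert modules -/

variable {M : Type*} [NormedAddCommGroup M] (h : HilbertModuleMat m M)

lemma smul_zero_vec (c : Matrix (Fin m) (Fin m) ℂ) : h.smul 0 c = 0 := by
  have := h.smul_add_vec 0 0 c
  rw [add_zero] at this
  exact (add_eq_right.mp this.symm)

lemma smul_zero_alg (u : M) : h.smul u 0 = 0 := by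
  have := h.smul_add_alg u 0 0
  rw [add_zero] at this
  exact (add_eq_right.mp this.symm)

lemma inner_smul_left (u v : M) (c : Matrix (Fin m) (Fin m) ℂ) :
    h.inner (h.smul u c) v = cᴴ * h.inner u v := by
  rw [h.inner_conj v (h.smul u c), h.inner_smul_right, star_mul, ← h.inner_conj v u]
  rfl

lemma inner_add_left (u v w : M) :
    h.inner (u + v) w = h.inner u w + h.inner v w := by
  rw [h.inner_conj w (u + v), h.inner_add_right, star_add, ← h.inner_conj w u,
    ← h.inner_conj w v]

lemma smul_sum {n : ℕ} (f : Fin n → M) (c : Matrix (Fin m) (Fin m) ℂ) :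
    h.smul (∑ i, f i) c = ∑ i, h.smul (f i) c := by
  classical
  induction (Finset.univ : Finset (Fin n)) using Finset.induction with
  | empty => simpa using smul_zero_vec h c
  | insert _ _ hx ih => rw [Finset.sum_insert hx, Finset.sum_insert hx, h.smul_add_vec, ih]

end HMMaux

open HMMaux in
/-- The underlying type of `M`, regarded as a complex Hilbert space via the trace form. -/
def HMWrap {m : ℕ} {M : Type*} [NormedAddCommGroup M] (_h : HilbertModuleMat m M) : Type _ := M

/-- Every Hilbert C*-module over `ℂ^{m×m}` has an orthonormal basis: an orthonormal system
whose `ℂ^{m×m}`-linear span is dense. -/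
theorem exists_orthonormal_basis
    {m : ℕ} {M : Type*} [NormedAddCommGroup M] [CompleteSpace M]
    (h : HilbertModuleMat m M) :
    ∃ S : Set M,
      (∀ q ∈ S, h.Normalized q) ∧
      (∀ q ∈ S, ∀ q' ∈ S, q ≠ q' → h.inner q q' = 0) ∧
      Dense (matLinSpan h S) := by
  classical
  -- Step 1: a maximal orthonormal system, by Zorn's lemma.
  let OS : Set (Set M) := {S | (∀ q ∈ S, h.Normalized q) ∧
    ∀ q ∈ S, ∀ q' ∈ S, q ≠ q' → h.inner q q' = 0}
  obtain ⟨S, hSmax⟩ : ∃ S, Maximal (· ∈ OS) S := by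
    apply zorn_subset
    intro c hc hchain
    refine ⟨⋃₀ c, ⟨?_, ?_⟩, fun s hs => Set.subset_sUnion_of_mem hs⟩
    · rintro q ⟨s, hs, hq⟩
      exact (hc hs).1 q hq
    · rintro q ⟨s, hs, hq⟩ q' ⟨t, ht, hq'⟩ hne
      rcases hchain.total hs ht with hst | hts
      · exact (hc ht).2 q (hst hq) q' hq' hne
      · exact (hc hs).2 q hq q' (hts hq') hne
  have hS : S ∈ OS := hSmax.prop
  refine ⟨S, hS.1, hS.2, ?_⟩
  -- Step 2: the trace form turns (the underlying type of) `M` into a complex Hilbert space.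
  letI : AddCommGroup (HMWrap h) := inferInstanceAs (AddCommGroup M)
  letI : Module ℂ (HMWrap h) :=
    { smul := fun c u => h.smul u (c • 1)
      one_smul := fun u => by show h.smul u ((1:ℂ) • 1) = u; erw [one_smul, h.smul_one]
      mul_smul := fun c d u => by
        show h.smul u ((c * d) • 1) = h.smul (h.smul u (d • 1)) (c • 1)
        erw [← h.smul_mul, smul_mul_smul_comm, mul_one, mul_comm d c]
      smul_zero := fun c => HMMaux.smul_zero_vec h _
      smul_add := fun c u v => h.smul_add_vec u v _
      add_smul := fun c d u => by
        show h.smul u ((c + d) • 1) = h.smul u (c • 1) + h.smul u (d • 1)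
        erw [add_smul, h.smul_add_alg]
      zero_smul := fun u => by
        show h.smul u ((0:ℂ) • 1) = 0
        rw [zero_smul]; exact HMMaux.smul_zero_alg h u }
  letI core : InnerProductSpace.Core ℂ (HMWrap h) :=
    { inner := fun u v => Matrix.trace (h.inner u v)
      conj_inner_symm := fun x y => by
        show star (Matrix.trace (h.inner y x)) = Matrix.trace (h.inner x y)
        rw [h.inner_conj x y, Matrix.star_eq_conjTranspose, Matrix.trace_conjTranspose,
          star_star]
      re_inner_nonneg := fun x => by
        have := HMMaux.psd_trace_re_nonneg (h.inner_self_posSemidef x)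
        exact this
      add_left := fun x y z => by
        show Matrix.trace (h.inner (x + y) z) = _
        erw [HMMaux.inner_add_left h, Matrix.trace_add]
      smul_left := fun x y c => by
        show Matrix.trace (h.inner (h.smul x (c • 1)) y)
          = star c * Matrix.trace (h.inner x y)
        erw [HMMaux.inner_smul_left h, Matrix.conjTranspose_smul, Matrix.conjTranspose_one,
          Matrix.smul_mul, Matrix.one_mul, Matrix.trace_smul]
        rfl
      definite := fun x hx =>
        h.inner_definite x (HMMaux.psd_trace_eq_zero (h.inner_self_posSemidef x) hx) }
  letI : NormedAddCommGroup (HMWrap h) := core.toNormedAddCommGroup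
  letI : InnerProductSpace ℂ (HMWrap h) := InnerProductSpace.ofCore core.toCore
  let toM : HMWrap h → M := fun u => u
  let ofM : M → HMWrap h := fun u => u
  -- Norm comparisons between the two norms on the same underlying type.
  have hWnorm : ∀ u : HMWrap h, ‖u‖ = Real.sqrt ((Matrix.trace (h.inner u u)).re) :=
    fun u => rfl
  have keyMW : ∀ u : HMWrap h, ‖toM u‖ ≤ ‖u‖ := by
    intro u
    rw [hWnorm, h.norm_eq]
    exact Real.sqrt_le_sqrt (HMMaux.psd_norm_le_trace (h.inner_self_posSemidef u))
  have keyWM : ∀ u : HMWrap h, ‖u‖ ≤ Real.sqrt m * ‖toM u‖ := by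
    intro u
    rw [hWnorm, h.norm_eq, ← Real.sqrt_mul (by positivity)]
    exact Real.sqrt_le_sqrt (HMMaux.psd_trace_le (h.inner_self_posSemidef u))
  have distMW : ∀ x y : HMWrap h, dist (toM x) (toM y) ≤ dist x y := by
    intro x y
    rw [dist_eq_norm, dist_eq_norm]
    exact keyMW (x - y)
  have distWM : ∀ x y : HMWrap h, dist x y ≤ Real.sqrt m * dist (toM x) (toM y) := by
    intro x y
    rw [dist_eq_norm, dist_eq_norm]
    exact keyWM (x - y)
  haveI : CompleteSpace (HMWrap h) := by
    apply Metric.complete_of_cauchySeq_tendsto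
    intro u hu
    have huM : CauchySeq (fun n => toM (u n)) := by
      rw [Metric.cauchySeq_iff] at hu ⊢
      intro ε hε
      obtain ⟨N, hN⟩ := hu ε hε
      exact ⟨N, fun p hp q hq => lt_of_le_of_lt (distMW (u p) (u q)) (hN p hp q hq)⟩
    obtain ⟨x, hx⟩ := cauchySeq_tendsto_of_complete huM
    refine ⟨ofM x, ?_⟩
    rw [Metric.tendsto_atTop] at hx ⊢
    intro ε hε
    have hε' : 0 < ε / (Real.sqrt m + 1) := by positivity
    obtain ⟨N, hN⟩ := hx _ hε'
    refine ⟨N, fun n hn => ?_⟩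
    have hs : (0:ℝ) ≤ Real.sqrt m := Real.sqrt_nonneg _
    calc dist (u n) (ofM x) ≤ Real.sqrt m * dist (toM (u n)) x := distWM _ _
      _ ≤ Real.sqrt m * (ε / (Real.sqrt m + 1)) := by
          have := (hN n hn).le
          nlinarith
      _ < ε := by
          rw [div_eq_inv_mul]
          have hlt : Real.sqrt m < Real.sqrt m + 1 := by linarith
          calc Real.sqrt m * ((Real.sqrt m + 1)⁻¹ * ε)
              = (Real.sqrt m / (Real.sqrt m + 1)) * ε := by ring
            _ < 1 * ε := by
                have : Real.sqrt m / (Real.sqrt m + 1) < 1 :=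
                  (div_lt_one (by linarith)).mpr hlt
                exact mul_lt_mul_of_pos_right this hε
            _ = ε := one_mul ε
  -- Step 3: the closed ℂ-span of the matrix span of `S` is everything.
  let Gens : Set (HMWrap h) := {v | ∃ q ∈ S, ∃ c, v = h.smul q c}
  let K : Submodule ℂ (HMWrap h) := Submodule.span ℂ Gens
  have horth : Kᗮ = ⊥ := by
    rw [Submodule.eq_bot_iff]
    intro v hv
    by_contra hv0
    -- `v` is orthogonal (in the module sense) to every element of `S`.
    have hqv : ∀ q ∈ S, h.inner q v = 0 := by
      intro q hq
      have hXad : ∀ d : Matrix (Fin m) (Fin m) ℂ,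
          Matrix.trace (Matrix.conjTranspose d * h.inner q v) = 0 := by
        intro d
        have hmem : (h.smul q d : HMWrap h) ∈ K := Submodule.subset_span ⟨q, hq, d, rfl⟩
        have h0 := (Submodule.mem_orthogonal K v).mp hv _ hmem
        have h1 : Matrix.trace (h.inner (h.smul q d) v) = 0 := h0
        erw [HMMaux.inner_smul_left h] at h1
        exact h1
      exact HMMaux.eq_zero_of_trace_conjTranspose_mul_self (hXad (h.inner q v))
    -- normalize `v` into a new orthonormal vector.
    have hvM0 : h.inner v v ≠ 0 := fun h0 => hv0 (h.inner_definite v h0)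
    obtain ⟨c, i, hc⟩ := HMMaux.psd_normalizer (h.inner_self_posSemidef v) hvM0
    set q' : M := h.smul v c with hq'def
    have hq'inner : h.inner q' q' = Matrix.single i i 1 := by
      erw [hq'def, HMMaux.inner_smul_left h, h.inner_smul_right, ← Matrix.mul_assoc, hc]
    have hq'n : h.Normalized q' := by
      refine ⟨?_, ?_⟩
      · rw [hq'inner]; exact HMMaux.stdBasisMatrix_ne_zero i
      · rw [hq'inner, Matrix.single_mul_single_same, one_mul]
    have hq'S : ∀ q ∈ S, h.inner q q' = 0 := by
      intro q hq
      erw [hq'def, h.inner_smul_right, hqv q hq, Matrix.zero_mul]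
    have hq'notS : q' ∉ S := fun hmem => hq'n.1 (hq'S q' hmem)
    have hins : insert q' S ∈ OS := by
      constructor
      · rintro q (rfl | hq)
        · exact hq'n
        · exact hS.1 q hq
      · rintro q (rfl | hq) q'' (rfl | hq'') hne
        · exact absurd rfl hne
        · rw [h.inner_conj q'' q', hq'S q'' hq'', star_zero]
        · exact hq'S q hq
        · exact hS.2 q hq q'' hq'' hne
    have hsub : insert q' S ⊆ S := hSmax.2 hins (Set.subset_insert q' S)
    exact hq'notS (hsub (Set.mem_insert q' S))
  have hdenseW : Dense (K : Set (HMWrap h)) :=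
    Submodule.dense_iff_topologicalClosure_eq_top.mpr
      (Submodule.topologicalClosure_eq_top_iff.mpr horth)
  -- Step 4: identify the ℂ-span with the matrix span.
  have hsub1 : ∀ w : HMWrap h, w ∈ K → toM w ∈ matLinSpan h S := by
    let P : Submodule ℂ (HMWrap h) :=
      { carrier := {w : HMWrap h | toM w ∈ matLinSpan h S}
        zero_mem' := ⟨0, Fin.elim0, Fin.elim0, (fun i => i.elim0), by simp; rfl⟩
        add_mem' := by
          rintro a b ⟨n₁, u₁, c₁, hu₁, rfl⟩ ⟨n₂, u₂, c₂, hu₂, rfl⟩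
          refine ⟨n₁ + n₂, Fin.append u₁ u₂, Fin.append c₁ c₂, ?_, ?_⟩
          · intro i
            exact Fin.addCases (motive := fun i => Fin.append u₁ u₂ i ∈ S)
              (fun j => by
                show Fin.append u₁ u₂ (Fin.castAdd n₂ j) ∈ S
                rw [Fin.append_left]; exact hu₁ j)
              (fun j => by
                show Fin.append u₁ u₂ (Fin.natAdd n₁ j) ∈ S
                rw [Fin.append_right]; exact hu₂ j) i
          · rw [Fin.sum_univ_add]
            simp only [Fin.append_left, Fin.append_right]
            rfl
        smul_mem' := by
          rintro a v ⟨n, u, c, hu, rfl⟩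
          refine ⟨n, u, fun i => c i * (a • 1), hu, ?_⟩
          show h.smul (∑ i, h.smul (u i) (c i)) (a • 1) = _
          rw [HMMaux.smul_sum h]
          exact Finset.sum_congr rfl fun i _ => (h.smul_mul (u i) (c i) (a • 1)).symm }
    have hGP : Gens ⊆ (P : Set (HMWrap h)) := by
      rintro x ⟨q, hq, c, rfl⟩
      exact ⟨1, fun _ => q, fun _ => c, fun _ => hq, by simp; rfl⟩
    exact fun w hw => Submodule.span_le.mpr hGP hw
  -- Step 5: transfer density to the original topology of `M`.
  rw [Metric.dense_iff]
  intro x r hr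
  obtain ⟨y, hy⟩ := Metric.dense_iff.mp hdenseW (ofM x) r hr
  refine ⟨toM y, ?_, hsub1 y hy.2⟩
  have hyb := hy.1
  rw [Metric.mem_ball] at hyb
  rw [Metric.mem_ball]
  exact lt_of_le_of_lt (distMW y (ofM x)) hyb
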